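/- arXiv:2506.17102 — 2 statements merged into one kernel-verified Lean document; each statement's English description precedes it below -/
import Mathlib

section
/- Let 0 ≤ ε ≤ 1, let λ ∈ ℂ with Im λ ≥ 0, and let b₁, b₂, b₃, b₄ : (0,π) → ℂ be measurable with |b_j(x)| ≤ ε for a.e. x (j = 1,2,3,4). Define Y(x) = ((1 + b₁(x))e^{iλx}, b₃(x)e^{iλx}) and Z(x) = (b₂(x)e^{-i·conj(λ)·x}, (1 + b₄(x))e^{-i·conj(λ)·x}). Then |⟨Y, Z⟩_H| ≤ 2ε(1 + ε)·min(π, 1/(2 Im λ)) (interpreting 1/(2·0) as +∞). -/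
open MeasureTheory

lemma aux_exp_int (c p : ℝ) (hc : c ≠ 0) :
    ∫ x in (0:ℝ)..p, Real.exp (c*x) = (Real.exp (c*p) - 1)/c := by
  have D : ∀ x : ℝ, HasDerivAt (fun y => Real.exp (c*y)/c) (Real.exp (c*x)) x := by
    intro x
    have := ((Real.hasDerivAt_exp (c*x)).comp x ((hasDerivAt_id x).const_mul c)).div_const c
    simpa [mul_comm, mul_div_cancel_left₀ _ hc] using this
  rw [intervalIntegral.integral_eq_sub_of_hasDerivAt (fun x _ => D x)
    ((Real.continuous_exp.comp (continuous_const.mul continuous_id)).intervalIntegrable 0 p)]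
  simp [sub_div]

/-- Let `0 ≤ ε ≤ 1`, `λ ∈ ℂ` with `Im λ ≥ 0`, and `b₁,b₂,b₃,b₄ : (0,π) → ℂ` measurable with
`|b_j| ≤ ε` a.e.  For `Y(x) = ((1+b₁(x))e^{iλx}, b₃(x)e^{iλx})` and
`Z(x) = (b₂(x)e^{-i conj(λ) x}, (1+b₄(x))e^{-i conj(λ) x})` one has
`|⟨Y, Z⟩_H| ≤ 2ε(1+ε)·min(π, 1/(2 Im λ))` (interpreting `1/(2·0)` as `+∞`, i.e. the bound
with `1/(2 Im λ)` is asserted when `Im λ > 0`). -/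
theorem stmt_8 (ε : ℝ) (hε0 : 0 ≤ ε) (hε1 : ε ≤ 1) (l : ℂ) (hl : 0 ≤ l.im)
    (b₁ b₂ b₃ b₄ : ℝ → ℂ)
    (hm₁ : Measurable b₁) (hm₂ : Measurable b₂) (hm₃ : Measurable b₃) (hm₄ : Measurable b₄)
    (h₁ : ∀ᵐ x ∂(volume.restrict (Set.Ioo 0 Real.pi)), ‖b₁ x‖ ≤ ε)
    (h₂ : ∀ᵐ x ∂(volume.restrict (Set.Ioo 0 Real.pi)), ‖b₂ x‖ ≤ ε)
    (h₃ : ∀ᵐ x ∂(volume.restrict (Set.Ioo 0 Real.pi)), ‖b₃ x‖ ≤ ε)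
    (h₄ : ∀ᵐ x ∂(volume.restrict (Set.Ioo 0 Real.pi)), ‖b₄ x‖ ≤ ε) :
    ‖∫ x in Set.Ioo (0 : ℝ) Real.pi,
        ((1 + b₁ x) * Complex.exp (Complex.I * l * x) *
            (starRingEnd ℂ) (b₂ x * Complex.exp (-(Complex.I * (starRingEnd ℂ) l * x))) +
          b₃ x * Complex.exp (Complex.I * l * x) *
            (starRingEnd ℂ)
              ((1 + b₄ x) * Complex.exp (-(Complex.I * (starRingEnd ℂ) l * x))))‖ ≤
        2 * ε * (1 + ε) * Real.pi ∧
      (0 < l.im →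
        ‖∫ x in Set.Ioo (0 : ℝ) Real.pi,
            ((1 + b₁ x) * Complex.exp (Complex.I * l * x) *
                (starRingEnd ℂ) (b₂ x * Complex.exp (-(Complex.I * (starRingEnd ℂ) l * x))) +
              b₃ x * Complex.exp (Complex.I * l * x) *
                (starRingEnd ℂ)
                  ((1 + b₄ x) * Complex.exp (-(Complex.I * (starRingEnd ℂ) l * x))))‖ ≤
          2 * ε * (1 + ε) * (1 / (2 * l.im))) := by
  set t := l.im with ht
  set g : ℝ → ℝ := fun x => (2*ε*(1+ε)) * Real.exp (-(2*t)*x) with hg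
  have hC0 : 0 ≤ 2*ε*(1+ε) := by positivity
  have hgcont : Continuous g :=
    continuous_const.mul (Real.continuous_exp.comp (continuous_const.mul continuous_id))
  have hgint : IntegrableOn g (Set.Ioo 0 Real.pi) :=
    (hgcont.integrableOn_Icc (a := 0) (b := Real.pi)).mono_set Set.Ioo_subset_Icc_self
  have hbound : ∀ᵐ x ∂(volume.restrict (Set.Ioo 0 Real.pi)),
      ‖(1 + b₁ x) * Complex.exp (Complex.I * l * x) *
            (starRingEnd ℂ) (b₂ x * Complex.exp (-(Complex.I * (starRingEnd ℂ) l * x))) +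
          b₃ x * Complex.exp (Complex.I * l * x) *
            (starRingEnd ℂ)
              ((1 + b₄ x) * Complex.exp (-(Complex.I * (starRingEnd ℂ) l * x)))‖ ≤ g x := by
    filter_upwards [h₁, h₂, h₃, h₄, ae_restrict_mem measurableSet_Ioo]
      with x hx1 hx2 hx3 hx4 hx
    have hE1 : ‖Complex.exp (Complex.I * l * x)‖ = Real.exp (-(t*x)) := by
      rw [Complex.norm_exp]
      congr 1
      simp [Complex.mul_re, Complex.mul_im, ht]
    have hE2 : ‖Complex.exp (-(Complex.I * (starRingEnd ℂ) l * x))‖ = Real.exp (-(t*x)) := by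
      rw [Complex.norm_exp]
      congr 1
      simp [Complex.mul_re, Complex.mul_im, ht]
    have h1b : ‖(1 : ℂ) + b₁ x‖ ≤ 1 + ε := by
      calc ‖(1:ℂ) + b₁ x‖ ≤ ‖(1:ℂ)‖ + ‖b₁ x‖ := norm_add_le _ _
        _ ≤ 1 + ε := by simp; exact hx1
    have h4b : ‖(1 : ℂ) + b₄ x‖ ≤ 1 + ε := by
      calc ‖(1:ℂ) + b₄ x‖ ≤ ‖(1:ℂ)‖ + ‖b₄ x‖ := norm_add_le _ _
        _ ≤ 1 + ε := by simp; exact hx4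
    have hee : Real.exp (-(t*x)) * Real.exp (-(t*x)) = Real.exp (-(2*t)*x) := by
      rw [← Real.exp_add]; ring_nf
    calc ‖(1 + b₁ x) * Complex.exp (Complex.I * l * x) *
            (starRingEnd ℂ) (b₂ x * Complex.exp (-(Complex.I * (starRingEnd ℂ) l * x))) +
          b₃ x * Complex.exp (Complex.I * l * x) *
            (starRingEnd ℂ)
              ((1 + b₄ x) * Complex.exp (-(Complex.I * (starRingEnd ℂ) l * x)))‖
        ≤ ‖(1 + b₁ x) * Complex.exp (Complex.I * l * x) *
            (starRingEnd ℂ) (b₂ x * Complex.exp (-(Complex.I * (starRingEnd ℂ) l * x)))‖ +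
          ‖b₃ x * Complex.exp (Complex.I * l * x) *
            (starRingEnd ℂ)
              ((1 + b₄ x) * Complex.exp (-(Complex.I * (starRingEnd ℂ) l * x)))‖ :=
          norm_add_le _ _
      _ = (‖(1:ℂ) + b₁ x‖ * ‖b₂ x‖) * (Real.exp (-(t*x)) * Real.exp (-(t*x)))
          + (‖b₃ x‖ * ‖(1:ℂ) + b₄ x‖) * (Real.exp (-(t*x)) * Real.exp (-(t*x))) := by
          simp only [norm_mul, RingHomIsometric.norm_map, hE1, hE2]
          ring
      _ ≤ ((1+ε) * ε) * (Real.exp (-(t*x)) * Real.exp (-(t*x)))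
          + (ε * (1+ε)) * (Real.exp (-(t*x)) * Real.exp (-(t*x))) := by
          gcongr <;> positivity
      _ = g x := by rw [hg]; simp only [hee]; ring
  have hmain : ‖∫ x in Set.Ioo (0 : ℝ) Real.pi,
        ((1 + b₁ x) * Complex.exp (Complex.I * l * x) *
            (starRingEnd ℂ) (b₂ x * Complex.exp (-(Complex.I * (starRingEnd ℂ) l * x))) +
          b₃ x * Complex.exp (Complex.I * l * x) *
            (starRingEnd ℂ)
              ((1 + b₄ x) * Complex.exp (-(Complex.I * (starRingEnd ℂ) l * x))))‖ ≤
      ∫ x in Set.Ioo (0 : ℝ) Real.pi, g x :=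
    norm_integral_le_of_norm_le hgint hbound
  constructor
  · refine hmain.trans ?_
    have h1 : ∫ x in Set.Ioo (0 : ℝ) Real.pi, g x ≤
        ∫ _ in Set.Ioo (0 : ℝ) Real.pi, (2*ε*(1+ε)) := by
      refine setIntegral_mono_on hgint (integrableOn_const (by
        simp [Real.volume_Ioo])) measurableSet_Ioo ?_
      intro x hx
      rw [hg]
      have h1 : Real.exp (-(2*t)*x) ≤ 1 := by
        rw [Real.exp_le_one_iff]
        nlinarith [hx.1]
      exact mul_le_of_le_one_right hC0 h1
    refine h1.trans ?_
    rw [setIntegral_const]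
    simp [Real.volume_Ioo, ENNReal.toReal_ofReal Real.pi_pos.le]
    rw [max_eq_left Real.pi_pos.le]
    nlinarith [Real.pi_pos]
  · intro hlt
    refine hmain.trans ?_
    have hne : (-(2*t)) ≠ 0 := neg_ne_zero.2 (by positivity)
    have hval : ∫ x in Set.Ioo (0 : ℝ) Real.pi, g x
        = (2*ε*(1+ε)) * ((Real.exp (-(2*t)*Real.pi) - 1)/(-(2*t))) := by
      rw [hg, integral_const_mul, ← integral_Ioc_eq_integral_Ioo,
        ← intervalIntegral.integral_of_le Real.pi_pos.le, aux_exp_int _ _ hne]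
    rw [hval]
    have hexp : 0 ≤ Real.exp (-(2*t)*Real.pi) := (Real.exp_pos _).le
    have hb : (Real.exp (-(2*t)*Real.pi) - 1)/(-(2*t)) ≤ 1/(2*t) := by
      have heq : (Real.exp (-(2*t)*Real.pi) - 1)/(-(2*t))
          = (1 - Real.exp (-(2*t)*Real.pi))/(2*t) := by
        rw [div_neg, ← neg_div]; ring_nf
      rw [heq]
      gcongr
      linarith
    calc (2*ε*(1+ε)) * ((Real.exp (-(2*t)*Real.pi) - 1)/(-(2*t)))
        ≤ (2*ε*(1+ε)) * (1/(2*t)) := by gcongr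
      _ = 2 * ε * (1 + ε) * (1 / (2 * l.im)) := by rw [ht]
end

section
/- Let E be a complex inner product space, let c > 0 and δ ≥ 0, let u₁, u₂, w₁, w₂ ∈ E, and let C₁, C₂, D₁, D₂ ∈ ℂ. Suppose ‖C₁u₁ + C₂u₂‖ ≥ c(|C₁|‖u₁‖ + |C₂|‖u₂‖), ‖D₁w₁ + D₂w₂‖ ≥ c(|D₁|‖w₁‖ + |D₂|‖w₂‖), and |⟨u_j, w_k⟩| ≤ δ‖u_j‖‖w_k‖ for all j,k ∈ {1,2}. Then |⟨C₁u₁ + C₂u₂, D₁w₁ + D₂w₂⟩| ≤ (δ/c²)·‖C₁u₁ + C₂u₂‖·‖D₁w₁ + D₂w₂‖. -/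
/-- Let `E` be a complex inner product space, `c > 0`, `δ ≥ 0`, `u₁,u₂,w₁,w₂ ∈ E`,
`C₁,C₂,D₁,D₂ ∈ ℂ`.  Suppose `‖C₁u₁ + C₂u₂‖ ≥ c(|C₁|‖u₁‖ + |C₂|‖u₂‖)`,
`‖D₁w₁ + D₂w₂‖ ≥ c(|D₁|‖w₁‖ + |D₂|‖w₂‖)`, and `|⟨u_j, w_k⟩| ≤ δ‖u_j‖‖w_k‖` for all
`j,k ∈ {1,2}`. Then
`|⟨C₁u₁ + C₂u₂, D₁w₁ + D₂w₂⟩| ≤ (δ/c²)·‖C₁u₁ + C₂u₂‖·‖D₁w₁ + D₂w₂‖`. -/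
theorem stmt_12 {E : Type*} [NormedAddCommGroup E] [InnerProductSpace ℂ E]
    (c δ : ℝ) (hc : 0 < c) (hδ : 0 ≤ δ) (u₁ u₂ w₁ w₂ : E) (C₁ C₂ D₁ D₂ : ℂ)
    (hu : c * (‖C₁‖ * ‖u₁‖ + ‖C₂‖ * ‖u₂‖) ≤ ‖C₁ • u₁ + C₂ • u₂‖)
    (hw : c * (‖D₁‖ * ‖w₁‖ + ‖D₂‖ * ‖w₂‖) ≤ ‖D₁ • w₁ + D₂ • w₂‖)
    (h11 : ‖(inner ℂ u₁ w₁ : ℂ)‖ ≤ δ * (‖u₁‖ * ‖w₁‖))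
    (h12 : ‖(inner ℂ u₁ w₂ : ℂ)‖ ≤ δ * (‖u₁‖ * ‖w₂‖))
    (h21 : ‖(inner ℂ u₂ w₁ : ℂ)‖ ≤ δ * (‖u₂‖ * ‖w₁‖))
    (h22 : ‖(inner ℂ u₂ w₂ : ℂ)‖ ≤ δ * (‖u₂‖ * ‖w₂‖)) :
    ‖(inner ℂ (C₁ • u₁ + C₂ • u₂) (D₁ • w₁ + D₂ • w₂) : ℂ)‖ ≤
      δ / c ^ 2 * ‖C₁ • u₁ + C₂ • u₂‖ * ‖D₁ • w₁ + D₂ • w₂‖ := by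
  set A := ‖C₁‖ * ‖u₁‖ + ‖C₂‖ * ‖u₂‖ with hA
  set B := ‖D₁‖ * ‖w₁‖ + ‖D₂‖ * ‖w₂‖ with hB
  have hA0 : 0 ≤ A := by positivity
  have hB0 : 0 ≤ B := by positivity
  have key : ‖(inner ℂ (C₁ • u₁ + C₂ • u₂) (D₁ • w₁ + D₂ • w₂) : ℂ)‖ ≤ δ * A * B := by
    have expand : (inner ℂ (C₁ • u₁ + C₂ • u₂) (D₁ • w₁ + D₂ • w₂) : ℂ) =
        (starRingEnd ℂ) C₁ * D₁ * inner ℂ u₁ w₁ + (starRingEnd ℂ) C₁ * D₂ * inner ℂ u₁ w₂ +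
        (starRingEnd ℂ) C₂ * D₁ * inner ℂ u₂ w₁ + (starRingEnd ℂ) C₂ * D₂ * inner ℂ u₂ w₂ := by
      simp [inner_add_add_self, inner_add_left, inner_add_right, inner_smul_left,
        inner_smul_right]
      ring
    rw [expand]
    have t1 : ‖(starRingEnd ℂ) C₁ * D₁ * (inner ℂ u₁ w₁ : ℂ)‖ ≤ ‖C₁‖ * ‖D₁‖ * (δ * (‖u₁‖ * ‖w₁‖)) := by
      rw [norm_mul, norm_mul, RCLike.norm_conj]
      gcongr
    have t2 : ‖(starRingEnd ℂ) C₁ * D₂ * (inner ℂ u₁ w₂ : ℂ)‖ ≤ ‖C₁‖ * ‖D₂‖ * (δ * (‖u₁‖ * ‖w₂‖)) := by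
      rw [norm_mul, norm_mul, RCLike.norm_conj]
      gcongr
    have t3 : ‖(starRingEnd ℂ) C₂ * D₁ * (inner ℂ u₂ w₁ : ℂ)‖ ≤ ‖C₂‖ * ‖D₁‖ * (δ * (‖u₂‖ * ‖w₁‖)) := by
      rw [norm_mul, norm_mul, RCLike.norm_conj]
      gcongr
    have t4 : ‖(starRingEnd ℂ) C₂ * D₂ * (inner ℂ u₂ w₂ : ℂ)‖ ≤ ‖C₂‖ * ‖D₂‖ * (δ * (‖u₂‖ * ‖w₂‖)) := by
      rw [norm_mul, norm_mul, RCLike.norm_conj]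
      gcongr
    calc _ ≤ ‖(starRingEnd ℂ) C₁ * D₁ * (inner ℂ u₁ w₁ : ℂ)‖ + ‖(starRingEnd ℂ) C₁ * D₂ * (inner ℂ u₁ w₂ : ℂ)‖
            + ‖(starRingEnd ℂ) C₂ * D₁ * (inner ℂ u₂ w₁ : ℂ)‖ + ‖(starRingEnd ℂ) C₂ * D₂ * (inner ℂ u₂ w₂ : ℂ)‖ := by
          exact le_trans (norm_add_le _ _) (by gcongr <;> exact le_trans (norm_add_le _ _) (by gcongr; exact norm_add_le _ _))
      _ ≤ _ := by
          have : δ * A * B = ‖C₁‖ * ‖D₁‖ * (δ * (‖u₁‖ * ‖w₁‖)) + ‖C₁‖ * ‖D₂‖ * (δ * (‖u₁‖ * ‖w₂‖))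
              + ‖C₂‖ * ‖D₁‖ * (δ * (‖u₂‖ * ‖w₁‖)) + ‖C₂‖ * ‖D₂‖ * (δ * (‖u₂‖ * ‖w₂‖)) := by
            rw [hA, hB]; ring
          linarith
  refine key.trans ?_
  have h1 : A ≤ ‖C₁ • u₁ + C₂ • u₂‖ / c := (le_div_iff₀' hc).mpr hu
  have h2 : B ≤ ‖D₁ • w₁ + D₂ • w₂‖ / c := (le_div_iff₀' hc).mpr hw
  calc δ * A * B ≤ δ * (‖C₁ • u₁ + C₂ • u₂‖ / c) * (‖D₁ • w₁ + D₂ • w₂‖ / c) := by gcongr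
    _ = δ / c ^ 2 * ‖C₁ • u₁ + C₂ • u₂‖ * ‖D₁ • w₁ + D₂ • w₂‖ := by ring
end
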